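/- Let E be a symmetric 3×3 real matrix and ê ∈ ℝ³ a unit vector; set Q = −I + 2 ê⊗ê and Ê = Q E Q, and assume Ê ≠ E. Define a = 4 ((ê · E ê) ê − E ê) and n = ê. Then the following are equivalent: (i) for every f ∈ [0,1] there exist vectors b, m ∈ ℝ³ with f Ê + (1−f) E = (1/2)(b ⊗ m + m ⊗ b); (ii) all three of the following hold: (CCL1) the middle eigenvalue of E (eigenvalues ordered increasingly) is 0 and E has rank 2; (CCL2) (a · v₂)(n · v₂) = 0, where v₂ is a unit vector with E v₂ = 0; (CCL3) (tr(E + Ê))² − tr((E + Ê)²) ≤ 0. -/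

import Mathlib

open Matrix Polynomial

/-- `μ` is the middle eigenvalue of the symmetric matrix `E`: its eigenvalues,
with multiplicity, are `l1 ≤ μ ≤ l3`. -/
def IsMiddleEigenvalue (E : Matrix (Fin 3) (Fin 3) ℝ) (μ : ℝ) : Prop :=
  ∃ l1 l3 : ℝ, l1 ≤ μ ∧ μ ≤ l3 ∧
    E.charpoly = (X - C l1) * (X - C μ) * (X - C l3)

abbrev Mat3 := Matrix (Fin 3) (Fin 3) ℝ
noncomputable def c2 (M : Mat3) : ℝ := (M.trace ^ 2 - (M * M).trace) / 2

lemma keyD (E A : Mat3) (f : ℝ) :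
    (E + f • A).det = E.det + f * ((E*E - E.trace • E + c2 E • 1) * A).trace
      + f^2 * (((A*A - A.trace • A + c2 A • 1) * E).trace) + f^3 * A.det := by
  simp [det_fin_three, trace_fin_three, mul_apply, Fin.sum_univ_three, c2, one_apply,
    Matrix.add_apply, Matrix.smul_apply, Matrix.sub_apply]
  ring

lemma keyQ (E A : Mat3) (f : ℝ) :
    c2 (E + f • A) = c2 E + f * (E.trace * A.trace - (E*A).trace) + f^2 * c2 A := by
  simp [c2, trace_fin_three, mul_apply, Fin.sum_univ_three,
    Matrix.add_apply, Matrix.smul_apply]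
  ring

lemma c2_eq (M : Mat3) : c2 M = M 0 0 * M 1 1 + M 0 0 * M 2 2 + M 1 1 * M 2 2
    - M 0 1 * M 1 0 - M 0 2 * M 2 0 - M 1 2 * M 2 1 := by
  simp [c2, trace_fin_three, mul_apply, Fin.sum_univ_three]; ring

lemma charpoly3 (M : Mat3) :
    M.charpoly = X^3 - C M.trace * X^2 + C (c2 M) * X - C M.det := by
  rw [c2_eq]
  simp [charpoly, charmatrix, det_fin_three, trace_fin_three,
    Matrix.map_apply, one_apply, det_fin_three]
  ring


lemma middle_iff (M : Mat3) : IsMiddleEigenvalue M 0 ↔ M.det = 0 ∧ c2 M ≤ 0 := by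
  constructor
  · rintro ⟨l1, l3, h1, h3, hp⟩
    rw [charpoly3] at hp
    have e0 := congrArg (Polynomial.eval 0) hp
    have e1 := congrArg (Polynomial.eval 1) hp
    have e2 := congrArg (Polynomial.eval (-1)) hp
    simp [Polynomial.eval_mul, Polynomial.eval_sub, Polynomial.eval_pow] at e0 e1 e2
    have hdet : M.det = 0 := by linarith
    have hc2 : c2 M = l1 * l3 := by nlinarith [e1, e2]
    exact ⟨hdet, by rw [hc2]; exact mul_nonpos_of_nonpos_of_nonneg h1 h3⟩
  · rintro ⟨hdet, hc2⟩
    set τ := M.trace with hτ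
    have hnn : 0 ≤ τ^2 - 4 * c2 M := by nlinarith [sq_nonneg τ]
    set s := Real.sqrt (τ^2 - 4 * c2 M) with hs
    have hs2 : s^2 = τ^2 - 4 * c2 M := Real.sq_sqrt hnn
    have hsabs : |τ| ≤ s := by
      rw [hs, ← Real.sqrt_sq_eq_abs]
      exact Real.sqrt_le_sqrt (by nlinarith)
    refine ⟨(τ - s)/2, (τ + s)/2, ?_, ?_, ?_⟩
    · cases abs_le.mp (le_refl |τ|) with
      | intro h h' => nlinarith [le_abs_self τ, neg_abs_le τ]
    · nlinarith [le_abs_self τ, neg_abs_le τ, hsabs]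
    · rw [charpoly3, hdet]
      have h1 : τ = (τ - s)/2 + (τ + s)/2 := by ring
      have h2 : c2 M = ((τ - s)/2) * ((τ + s)/2) := by nlinarith [hs2]
      rw [show C τ = C ((τ - s)/2) + C ((τ + s)/2) by rw [← C_add]; exact congrArg C (by ring),
        show C (c2 M) = C ((τ - s)/2) * C ((τ + s)/2) by rw [← C_mul]; exact congrArg C h2]
      simp only [map_zero, C_0]
      ring

lemma det_half_sym (b m : Fin 3 → ℝ) :
    ((1/2:ℝ) • (vecMulVec b m + vecMulVec m b)).det = 0 := by
  simp [det_fin_three, vecMulVec_apply, Matrix.add_apply, Matrix.smul_apply]; ring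

lemma c2_half_sym (b m : Fin 3 → ℝ) :
    c2 ((1/2:ℝ) • (vecMulVec b m + vecMulVec m b))
      = ((b ⬝ᵥ m)^2 - (b ⬝ᵥ b) * (m ⬝ᵥ m))/4 := by
  simp [c2, trace_fin_three, mul_apply, Fin.sum_univ_three, vecMulVec_apply,
    Matrix.add_apply, Matrix.smul_apply, dotProduct]
  ring

lemma trace_half_sym (b m : Fin 3 → ℝ) :
    ((1/2:ℝ) • (vecMulVec b m + vecMulVec m b)).trace = b ⬝ᵥ m := by
  simp [trace_fin_three, vecMulVec_apply, Matrix.add_apply, Matrix.smul_apply,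
    dotProduct, Fin.sum_univ_three]
  ring

lemma cauchy3 (b m : Fin 3 → ℝ) : (b ⬝ᵥ m)^2 ≤ (b ⬝ᵥ b) * (m ⬝ᵥ m) := by
  simp only [dotProduct, Fin.sum_univ_three]
  nlinarith [sq_nonneg (b 0 * m 1 - b 1 * m 0), sq_nonneg (b 0 * m 2 - b 2 * m 0),
    sq_nonneg (b 1 * m 2 - b 2 * m 1)]

lemma conj_vmv (U : Mat3) (x y : Fin 3 → ℝ) :
    U * vecMulVec x y * Uᵀ = vecMulVec (U *ᵥ x) (U *ᵥ y) := by
  ext i j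
  simp [mul_apply, vecMulVec_apply, mulVec, dotProduct, Fin.sum_univ_three,
    transpose_apply]
  ring

lemma vmv_mul_vmv (x y z w : Fin 3 → ℝ) :
    vecMulVec x y * vecMulVec z w = (y ⬝ᵥ z) • vecMulVec x w := by
  ext i j
  simp [mul_apply, vecMulVec_apply, dotProduct, Fin.sum_univ_three, Matrix.smul_apply]
  ring

lemma vmv_mul (x y : Fin 3 → ℝ) (M : Mat3) :
    vecMulVec x y * M = vecMulVec x (Mᵀ *ᵥ y) := by
  ext i j
  simp [mul_apply, vecMulVec_apply, mulVec, dotProduct, Fin.sum_univ_three, transpose_apply]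
  ring

lemma mul_vmv (M : Mat3) (x y : Fin 3 → ℝ) :
    M * vecMulVec x y = vecMulVec (M *ᵥ x) y := by
  ext i j
  simp [mul_apply, vecMulVec_apply, mulVec, dotProduct, Fin.sum_univ_three]
  ring

lemma trace_vmv_mul (v w : Fin 3 → ℝ) (M : Mat3) :
    (vecMulVec v w * M).trace = w ⬝ᵥ (M *ᵥ v) := by
  simp [trace_fin_three, mul_apply, vecMulVec_apply, mulVec, dotProduct, Fin.sum_univ_three]
  ring

lemma conj_inv3 (U M : Mat3) (h2 : Uᵀ * U = 1) :
    (U * M * Uᵀ).trace = M.trace ∧ (U * M * Uᵀ).det = M.det ∧ c2 (U * M * Uᵀ) = c2 M := by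
  have htr : (U * M * Uᵀ).trace = M.trace := by
    rw [trace_mul_comm, ← mul_assoc, h2, one_mul]
  have hdet : (U * M * Uᵀ).det = M.det := by
    have h1 : U.det * Uᵀ.det = 1 := by rw [mul_comm, ← det_mul, h2, det_one]
    rw [det_mul, det_mul]
    calc U.det * M.det * Uᵀ.det = (U.det * Uᵀ.det) * M.det := by ring
      _ = M.det := by rw [h1, one_mul]
  have hsq : (U * M * Uᵀ) * (U * M * Uᵀ) = U * (M * M) * Uᵀ := by
    calc (U * M * Uᵀ) * (U * M * Uᵀ) = U * M * (Uᵀ * U) * M * Uᵀ := by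
          simp only [mul_assoc]
      _ = U * (M * M) * Uᵀ := by rw [h2]; simp only [mul_one, mul_assoc]
  refine ⟨htr, hdet, ?_⟩
  rw [c2, c2, hsq, htr, trace_mul_comm, ← mul_assoc, h2, one_mul]

lemma det_diag3 (μ : Fin 3 → ℝ) : (diagonal μ).det = μ 0 * (μ 1 * μ 2) := by
  rw [det_diagonal, Fin.prod_univ_three]; ring

lemma c2_diag3 (μ : Fin 3 → ℝ) :
    c2 (diagonal μ) = μ 0 * μ 1 + μ 0 * μ 2 + μ 1 * μ 2 := by
  simp [c2, trace_fin_three, mul_apply, Fin.sum_univ_three, diagonal]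
  ring

lemma trace_diag3 (μ : Fin 3 → ℝ) : (diagonal μ).trace = μ 0 + μ 1 + μ 2 := by
  simp [trace_fin_three, diagonal]

lemma spectral3 (S : Mat3) (hS : S.IsSymm) :
    ∃ (U : Mat3) (μ : Fin 3 → ℝ), U * Uᵀ = 1 ∧ Uᵀ * U = 1 ∧
      S = U * diagonal μ * Uᵀ ∧ S.rank = Fintype.card {i // μ i ≠ 0} := by
  have hH : S.IsHermitian := by
    rwa [IsHermitian, conjTranspose_eq_transpose_of_trivial]
  refine ⟨(hH.eigenvectorUnitary : Mat3), hH.eigenvalues, ?_, ?_, ?_, ?_⟩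
  · have := (Matrix.mem_unitaryGroup_iff).mp hH.eigenvectorUnitary.2
    rwa [Matrix.star_eq_conjTranspose, conjTranspose_eq_transpose_of_trivial] at this
  · have := (Matrix.mem_unitaryGroup_iff').mp hH.eigenvectorUnitary.2
    rwa [Matrix.star_eq_conjTranspose, conjTranspose_eq_transpose_of_trivial] at this
  · have := hH.spectral_theorem
    rw [Unitary.conjStarAlgAut_apply, Matrix.star_eq_conjTranspose, conjTranspose_eq_transpose_of_trivial,
      RCLike.ofReal_real_eq_id, Function.id_comp] at this
    exact this
  · exact hH.rank_eq_card_non_zero_eigs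

lemma two_of {x y : ℝ} (hxy : x * y ≤ 0) : (x ≤ 0 ∧ 0 ≤ y) ∨ (y ≤ 0 ∧ 0 ≤ x) := by
  rcases le_total x 0 with hx | hx <;> rcases le_total y 0 with hy | hy
  · have h0 : x * y = 0 := le_antisymm hxy (by nlinarith)
    rcases mul_eq_zero.mp h0 with h | h
    · exact Or.inr ⟨hy, le_of_eq h.symm⟩
    · exact Or.inl ⟨hx, le_of_eq h.symm⟩
  · exact Or.inl ⟨hx, hy⟩
  · exact Or.inr ⟨hy, hx⟩
  · have h0 : x * y = 0 := le_antisymm hxy (mul_nonneg hx hy)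
    rcases mul_eq_zero.mp h0 with h | h
    · exact Or.inl ⟨le_of_eq h, hy⟩
    · exact Or.inr ⟨le_of_eq h, hx⟩

lemma helper_ij (μ : Fin 3 → ℝ) (hd : μ 0 * (μ 1 * μ 2) = 0)
    (hc : μ 0 * μ 1 + μ 0 * μ 2 + μ 1 * μ 2 ≤ 0) :
    ∃ i j : Fin 3, i ≠ j ∧ μ i ≤ 0 ∧ 0 ≤ μ j ∧ ∀ k, k ≠ i → k ≠ j → μ k = 0 := by
  rcases mul_eq_zero.mp hd with h0 | h12
  · have h12' : μ 1 * μ 2 ≤ 0 := by have h := hc; rw [h0] at h; simpa using h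
    rcases two_of h12' with ⟨ha, hb⟩ | ⟨ha, hb⟩
    · exact ⟨1, 2, by decide, ha, hb, fun k hk1 hk2 => by fin_cases k <;> simp_all⟩
    · exact ⟨2, 1, by decide, ha, hb, fun k hk1 hk2 => by fin_cases k <;> simp_all⟩
  rcases mul_eq_zero.mp h12 with h1 | h2
  · have h02' : μ 0 * μ 2 ≤ 0 := by have h := hc; rw [h1] at h; simpa using h
    rcases two_of h02' with ⟨ha, hb⟩ | ⟨ha, hb⟩
    · exact ⟨0, 2, by decide, ha, hb, fun k hk1 hk2 => by fin_cases k <;> simp_all⟩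
    · exact ⟨2, 0, by decide, ha, hb, fun k hk1 hk2 => by fin_cases k <;> simp_all⟩
  · have h01' : μ 0 * μ 1 ≤ 0 := by have h := hc; rw [h2] at h; simpa using h
    rcases two_of h01' with ⟨ha, hb⟩ | ⟨ha, hb⟩
    · exact ⟨0, 1, by decide, ha, hb, fun k hk1 hk2 => by fin_cases k <;> simp_all⟩
    · exact ⟨1, 0, by decide, ha, hb, fun k hk1 hk2 => by fin_cases k <;> simp_all⟩

lemma helper_one_zero (μ : Fin 3 → ℝ) (hd : μ 0 * (μ 1 * μ 2) = 0)
    (hc : μ 0 * μ 1 + μ 0 * μ 2 + μ 1 * μ 2 < 0) :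
    ∃ k, μ k = 0 ∧ ∀ i, i ≠ k → μ i ≠ 0 := by
  rcases mul_eq_zero.mp hd with h0 | h12
  · refine ⟨0, h0, fun i hi => ?_⟩
    have h12' : μ 1 * μ 2 < 0 := by have h := hc; rw [h0] at h; simpa using h
    fin_cases i <;> simp_all <;> intro h <;> rw [h] at h12' <;> simp at h12'
  rcases mul_eq_zero.mp h12 with h1 | h2
  · refine ⟨1, h1, fun i hi => ?_⟩
    have h02' : μ 0 * μ 2 < 0 := by have h := hc; rw [h1] at h; simpa using h
    fin_cases i <;> simp_all <;> intro h <;> rw [h] at h02' <;> simp at h02'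
  · refine ⟨2, h2, fun i hi => ?_⟩
    have h01' : μ 0 * μ 1 < 0 := by have h := hc; rw [h2] at h; simpa using h
    fin_cases i <;> simp_all <;> intro h <;> rw [h] at h01' <;> simp at h01'

lemma helper_two_zero (μ : Fin 3 → ℝ) (hd : μ 0 * (μ 1 * μ 2) = 0)
    (hc : μ 0 * μ 1 + μ 0 * μ 2 + μ 1 * μ 2 = 0) :
    ∃ k k' : Fin 3, k ≠ k' ∧ μ k = 0 ∧ μ k' = 0 := by
  rcases mul_eq_zero.mp hd with h0 | h12
  · have h12' : μ 1 * μ 2 = 0 := by have h := hc; rw [h0] at h; simpa using h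
    rcases mul_eq_zero.mp h12' with h | h
    · exact ⟨0, 1, by decide, h0, h⟩
    · exact ⟨0, 2, by decide, h0, h⟩
  rcases mul_eq_zero.mp h12 with h1 | h2
  · have h02' : μ 0 * μ 2 = 0 := by have h := hc; rw [h1] at h; simpa using h
    rcases mul_eq_zero.mp h02' with h | h
    · exact ⟨1, 0, by decide, h1, h⟩
    · exact ⟨1, 2, by decide, h1, h⟩
  · have h01' : μ 0 * μ 1 = 0 := by have h := hc; rw [h2] at h; simpa using h
    rcases mul_eq_zero.mp h01' with h | h
    · exact ⟨2, 0, by decide, h2, h⟩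
    · exact ⟨2, 1, by decide, h2, h⟩

lemma card_two (μ : Fin 3 → ℝ) (k : Fin 3) (hk : μ k = 0) (ho : ∀ i, i ≠ k → μ i ≠ 0) :
    Fintype.card {i // μ i ≠ 0} = 2 := by
  classical
  have he : ∀ i : Fin 3, μ i ≠ 0 ↔ i ≠ k := by
    intro i
    constructor
    · intro h hik; exact h (hik ▸ hk)
    · exact ho i
  have he' : ∀ i : Fin 3, μ i ≠ 0 ↔ ¬ (i = k) := he
  rw [Fintype.card_congr (Equiv.subtypeEquivRight he')]
  simp [Fintype.card_subtype_compl, Fintype.card_subtype_eq]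

lemma card_le_one_of_two_zeros (μ : Fin 3 → ℝ) (k k' : Fin 3) (hkk' : k ≠ k')
    (h : μ k = 0) (h' : μ k' = 0) : Fintype.card {i // μ i ≠ 0} ≤ 1 := by
  classical
  apply Fintype.card_le_one_iff.mpr
  rintro ⟨x, hx⟩ ⟨y, hy⟩
  have hxk : x ≠ k := fun hh => hx (hh ▸ h)
  have hxk' : x ≠ k' := fun hh => hx (hh ▸ h')
  have hyk : y ≠ k := fun hh => hy (hh ▸ h)
  have hyk' : y ≠ k' := fun hh => hy (hh ▸ h')
  have fin3eq : ∀ k k' x y : Fin 3, k ≠ k' → x ≠ k → x ≠ k' → y ≠ k → y ≠ k' → x = y := by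
    decide
  exact Subtype.ext (fin3eq k k' x y hkk' hxk hxk' hyk hyk')

lemma diag_repr (d : Fin 3 → ℝ) (i j : Fin 3) (hij : i ≠ j) (hi : d i ≤ 0) (hj : 0 ≤ d j)
    (hk : ∀ k, k ≠ i → k ≠ j → d k = 0) :
    ∃ b m : Fin 3 → ℝ,
      diagonal d = (1/2:ℝ) • (vecMulVec b m + vecMulVec m b) := by
  refine ⟨fun t => if t = j then Real.sqrt (d j) else if t = i then Real.sqrt (-d i) else 0,
    fun t => if t = j then Real.sqrt (d j) else if t = i then -Real.sqrt (-d i) else 0, ?_⟩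
  have hdi : Real.sqrt (-d i) * Real.sqrt (-d i) = -d i :=
    Real.mul_self_sqrt (by linarith)
  have hdj : Real.sqrt (d j) * Real.sqrt (d j) = d j := Real.mul_self_sqrt hj
  ext s t
  simp only [Matrix.smul_apply, Matrix.add_apply, vecMulVec_apply, smul_eq_mul,
    Matrix.diagonal_apply]
  split_ifs <;> simp_all <;> ring

lemma ker_package (S U : Mat3) (μ : Fin 3 → ℝ) (h1 : U * Uᵀ = 1) (h2 : Uᵀ * U = 1)
    (hSd : S = U * diagonal μ * Uᵀ) (k : Fin 3) (hk : μ k = 0)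
    (ho : ∀ i, i ≠ k → μ i ≠ 0) :
    ∃ v2 : Fin 3 → ℝ, v2 ⬝ᵥ v2 = 1 ∧ S *ᵥ v2 = 0 ∧
      ∀ x, S *ᵥ x = 0 → ∃ c : ℝ, x = c • v2 := by
  set v2 : Fin 3 → ℝ := fun i => U i k with hv2
  have hv2e : v2 = U *ᵥ (Pi.single k 1 : Fin 3 → ℝ) := by
    funext i; simp [hv2, mulVec_single]
  have hSU : S * U = U * diagonal μ := by
    rw [hSd, mul_assoc, h2, mul_one]
  have hUS : Uᵀ * S = diagonal μ * Uᵀ := by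
    rw [hSd, ← mul_assoc, ← mul_assoc, h2, one_mul]
  refine ⟨v2, ?_, ?_, ?_⟩
  · have := congrFun (congrFun h2 k) k
    simpa [mul_apply, dotProduct, transpose_apply, one_apply, hv2] using this
  · rw [hv2e, mulVec_mulVec, hSU, ← mulVec_mulVec, diagonal_mulVec_single, hk]
    simp
  · intro x hx
    have hxrec : x = U *ᵥ (Uᵀ *ᵥ x) := by
      rw [mulVec_mulVec, h1, one_mulVec]
    have hDy : diagonal μ *ᵥ (Uᵀ *ᵥ x) = 0 := by
      rw [mulVec_mulVec, ← hUS, ← mulVec_mulVec, hx, mulVec_zero]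
    have hyi : ∀ i, i ≠ k → (Uᵀ *ᵥ x) i = 0 := by
      intro i hi
      have := congrFun hDy i
      rw [mulVec_diagonal] at this
      simp only [Pi.zero_apply] at this
      exact (mul_eq_zero.mp this).resolve_left (ho i hi)
    refine ⟨(Uᵀ *ᵥ x) k, ?_⟩
    have hy : Uᵀ *ᵥ x = (Uᵀ *ᵥ x) k • (Pi.single k 1 : Fin 3 → ℝ) := by
      funext i
      by_cases hik : i = k
      · subst hik; simp
      · simp [hyi i hik, Pi.single_apply, hik]
    conv_lhs => rw [hxrec, hy]
    rw [mulVec_smul, ← hv2e]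

lemma repr_of (S : Mat3) (hS : S.IsSymm) (hdet : S.det = 0) (hc2 : c2 S ≤ 0) :
    ∃ b m : Fin 3 → ℝ, S = (1/2:ℝ) • (vecMulVec b m + vecMulVec m b) := by
  obtain ⟨U, μ, h1, h2, hSd, hrank⟩ := spectral3 S hS
  have hinv := conj_inv3 U (diagonal μ) h2
  rw [← hSd] at hinv
  have hμd : μ 0 * (μ 1 * μ 2) = 0 := by
    rw [← det_diag3, ← hinv.2.1]; exact hdet
  have hμc : μ 0 * μ 1 + μ 0 * μ 2 + μ 1 * μ 2 ≤ 0 := by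
    rw [← c2_diag3, ← hinv.2.2]; exact hc2
  obtain ⟨i, j, hij, hi, hj, hk⟩ := helper_ij μ hμd hμc
  obtain ⟨b', m', hbm⟩ := diag_repr μ i j hij hi hj hk
  refine ⟨U *ᵥ b', U *ᵥ m', ?_⟩
  rw [hSd, hbm, Matrix.mul_smul, Matrix.smul_mul, mul_add, add_mul, conj_vmv, conj_vmv]

lemma mul_G (M : Mat3) : M * (M * M - M.trace • M + c2 M • 1) = M.det • 1 := by
  ext i j
  fin_cases i <;> fin_cases j <;>
    simp [mul_apply, Fin.sum_univ_three, trace_fin_three, c2, det_fin_three, one_apply,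
      Matrix.smul_apply, Matrix.sub_apply, Matrix.add_apply] <;> ring

lemma quad_half_sym (a n v : Fin 3 → ℝ) :
    v ⬝ᵥ (((1/2:ℝ) • (vecMulVec a n + vecMulVec n a)) *ᵥ v)
      = (a ⬝ᵥ v) * (n ⬝ᵥ v) := by
  simp [dotProduct, mulVec, vecMulVec_apply, Fin.sum_univ_three,
    Matrix.smul_apply, Matrix.add_apply]
  ring

lemma G_eq (E : Mat3) (hE : E.IsSymm) (hdet : E.det = 0)
    (v2 : Fin 3 → ℝ) (hv2u : v2 ⬝ᵥ v2 = 1) (hv2k : E *ᵥ v2 = 0)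
    (hker : ∀ x, E *ᵥ x = 0 → ∃ c : ℝ, x = c • v2) :
    E * E - E.trace • E + c2 E • 1 = c2 E • vecMulVec v2 v2 := by
  set G : Mat3 := E * E - E.trace • E + c2 E • 1 with hG
  have hEG : E * G = 0 := by
    rw [hG, mul_G, hdet, zero_smul]
  have hcol : ∀ x : Fin 3 → ℝ, ∃ c : ℝ, G *ᵥ x = c • v2 := by
    intro x
    apply hker
    rw [mulVec_mulVec, hEG, zero_mulVec]
  choose c hc using fun j => hcol (Pi.single j 1)
  have hGij : ∀ i j, G i j = c j * v2 i := by
    intro i j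
    have := congrFun (hc j) i
    simpa [mulVec_single] using this
  have hGsym : ∀ i j, G i j = G j i := by
    intro i j
    have hs : G.IsSymm := by
      rw [hG, Matrix.IsSymm, transpose_add, transpose_sub, transpose_smul, transpose_smul,
        transpose_mul, transpose_one, hE]
    exact congrFun (congrFun hs j) i
  have hv2ne : ∃ i0, v2 i0 ≠ 0 := by
    by_contra h
    push_neg at h
    rw [show v2 = 0 from funext h] at hv2u
    simp [dotProduct] at hv2u
  obtain ⟨i0, hi0⟩ := hv2ne
  have hGv2 : G *ᵥ v2 = c2 E • v2 := by
    rw [hG, add_mulVec, sub_mulVec, ← mulVec_mulVec, hv2k, mulVec_zero, smul_mulVec,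
      hv2k, smul_zero, smul_mulVec, one_mulVec]
    simp
  have hγ : c i0 = c2 E * v2 i0 := by
    have h1' := congrFun hGv2 i0
    simp only [mulVec, dotProduct, Fin.sum_univ_three, Pi.smul_apply, smul_eq_mul] at h1'
    rw [hGij i0 0, hGij i0 1, hGij i0 2] at h1'
    -- Σ_j c j * v2 i0 * v2 j = c2 E * v2 i0 ; and c j * v2 i0 = c i0 * v2 j
    have e0 : c 0 * v2 i0 = c i0 * v2 0 := by
      have := (hGij i0 0).symm.trans ((hGsym i0 0).trans (hGij 0 i0)); linarith [this]
    have e1 : c 1 * v2 i0 = c i0 * v2 1 := by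
      have := (hGij i0 1).symm.trans ((hGsym i0 1).trans (hGij 1 i0)); linarith [this]
    have e2 : c 2 * v2 i0 = c i0 * v2 2 := by
      have := (hGij i0 2).symm.trans ((hGsym i0 2).trans (hGij 2 i0)); linarith [this]
    have hdot : v2 0 * v2 0 + v2 1 * v2 1 + v2 2 * v2 2 = 1 := by
      simpa [dotProduct, Fin.sum_univ_three] using hv2u
    linear_combination h1' - v2 0 * e0 - v2 1 * e1 - v2 2 * e2 - c i0 * hdot
  ext i j
  rw [Matrix.smul_apply, vecMulVec_apply, hGij i j]
  have hcj : c j * v2 i0 = c i0 * v2 j := by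
    have := (hGij i0 j).symm.trans ((hGsym i0 j).trans (hGij j i0)); linarith [this]
  have : c j * v2 i0 = c2 E * v2 j * v2 i0 := by rw [hcj, hγ]; ring
  have hcjv : c j = c2 E * v2 j :=
    mul_right_cancel₀ hi0 (by linarith [this] : c j * v2 i0 = (c2 E * v2 j) * v2 i0)
  rw [hcjv]
  simp only [smul_eq_mul]
  ring

lemma vmv_transpose (x y : Fin 3 → ℝ) : (vecMulVec x y)ᵀ = vecMulVec y x := by
  ext i j; simp [vecMulVec_apply, transpose_apply, mul_comm]

lemma vmv_smul_left (r : ℝ) (x y : Fin 3 → ℝ) :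
    vecMulVec (r • x) y = r • vecMulVec x y := by
  ext i j; simp [vecMulVec_apply]; ring

lemma vmv_smul_right (r : ℝ) (x y : Fin 3 → ℝ) :
    vecMulVec x (r • y) = r • vecMulVec x y := by
  ext i j; simp [vecMulVec_apply]; ring

lemma vmv_sub_left (x y z : Fin 3 → ℝ) :
    vecMulVec (x - y) z = vecMulVec x z - vecMulVec y z := by
  ext i j; simp [vecMulVec_apply]; ring

lemma vmv_sub_right (x y z : Fin 3 → ℝ) :
    vecMulVec x (y - z) = vecMulVec x y - vecMulVec x z := by
  ext i j; simp [vecMulVec_apply]; ring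

lemma c2_two_smul (M : Mat3) :
    ((2:ℝ) • M).trace ^ 2 - (((2:ℝ) • M) * ((2:ℝ) • M)).trace = 8 * c2 M := by
  simp [c2, trace_smul, Matrix.smul_mul, Matrix.mul_smul, smul_smul]
  ring

theorem stmt_13 (E : Matrix (Fin 3) (Fin 3) ℝ) (hE : E.IsSymm)
    (ehat : Fin 3 → ℝ) (he : ehat ⬝ᵥ ehat = 1)
    (Q Ehat : Matrix (Fin 3) (Fin 3) ℝ)
    (hQ : Q = -1 + (2 : ℝ) • Matrix.vecMulVec ehat ehat)
    (hEhat : Ehat = Q * E * Q) (hneq : Ehat ≠ E)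
    (a n : Fin 3 → ℝ)
    (ha : a = (4 : ℝ) • ((ehat ⬝ᵥ E.mulVec ehat) • ehat - E.mulVec ehat))
    (hn : n = ehat) :
    (∀ f ∈ Set.Icc (0 : ℝ) 1, ∃ b m : Fin 3 → ℝ,
        f • Ehat + (1 - f) • E
          = (1/2 : ℝ) • (Matrix.vecMulVec b m + Matrix.vecMulVec m b))
    ↔ ((IsMiddleEigenvalue E 0 ∧ E.rank = 2) ∧
       (∀ v2 : Fin 3 → ℝ, v2 ⬝ᵥ v2 = 1 → E.mulVec v2 = 0 →
          (a ⬝ᵥ v2) * (n ⬝ᵥ v2) = 0) ∧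
       ((E + Ehat).trace) ^ 2 - ((E + Ehat) * (E + Ehat)).trace ≤ 0) := by
  have hEsym' : Eᵀ = E := hE
  set P : Mat3 := vecMulVec ehat ehat with hP
  set A : Mat3 := (1/2:ℝ) • (vecMulVec a n + vecMulVec n a) with hAdef
  set cq : ℝ := ehat ⬝ᵥ (E *ᵥ ehat) with hcq
  -- Q facts
  have hQsym : Qᵀ = Q := by
    rw [hQ, transpose_add, transpose_neg, transpose_one, transpose_smul, hP, vmv_transpose]
  have hPP : P * P = P := by rw [hP, vmv_mul_vmv, he, one_smul]
  have hQE : Q * E = -E + (2:ℝ) • (P * E) := by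
    rw [hQ, add_mul, neg_mul, one_mul, Matrix.smul_mul]
  have hQQ : Q * Q = 1 := by
    rw [hQ, add_mul, mul_add, mul_add, neg_mul, one_mul, mul_neg, mul_one,
      Matrix.smul_mul, Matrix.mul_smul, Matrix.mul_smul, hPP, neg_neg, smul_smul]
    norm_num
    module
  have hQtQ : Qᵀ * Q = 1 := by rw [hQsym]; exact hQQ
  -- similarity invariants
  have hconj := conj_inv3 Q E hQtQ
  have hEhat' : Ehat = Q * E * Qᵀ := by rw [hEhat, hQsym]
  rw [← hEhat'] at hconj
  have hdetEhat : Ehat.det = E.det := hconj.2.1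
  have hc2Ehat : c2 Ehat = c2 E := hconj.2.2
  -- structural identity Ehat = E + A
  have hPE : P * E = vecMulVec ehat (E *ᵥ ehat) := by
    rw [hP, vmv_mul, hEsym']
  have hEP : E * P = vecMulVec (E *ᵥ ehat) ehat := by rw [hP, mul_vmv]
  have hPEP : P * (E * P) = cq • P := by
    rw [hEP, hP, vmv_mul_vmv, hcq]
  have hEQ : E * Q = -E + (2:ℝ) • (E * P) := by
    rw [hQ, mul_add, mul_neg, mul_one, Matrix.mul_smul]
  have hPEQ : P * E * Q = -(P * E) + (2:ℝ) • (cq • P) := by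
    rw [hQ, mul_add, mul_neg, mul_one, Matrix.mul_smul, mul_assoc, hPEP]
  have hQEQ : Ehat = E - (2:ℝ) • (P * E) - (2:ℝ) • (E * P) + (4:ℝ) • (cq • P) := by
    rw [hEhat, hQE, add_mul, neg_mul, hEQ, Matrix.smul_mul, hPEQ]
    module
  have hA' : A = ((4:ℝ) * cq) • P - (2:ℝ) • (vecMulVec (E *ᵥ ehat) ehat)
      - (2:ℝ) • (vecMulVec ehat (E *ᵥ ehat)) := by
    rw [hAdef, ha, hn, hP]
    rw [vmv_smul_left, vmv_smul_right, vmv_sub_left, vmv_sub_right, vmv_smul_left,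
      vmv_smul_right]
    module
  have hEA : Ehat = E + A := by
    rw [hQEQ, hA', hPE, hEP]
    module
  -- scalar facts about A
  have hSf : ∀ f : ℝ, f • Ehat + (1 - f) • E = E + f • A := by
    intro f; rw [hEA]; module
  have hAsym : Aᵀ = A := by
    rw [hAdef, transpose_smul, transpose_add, vmv_transpose, vmv_transpose, add_comm]
  have hSsymm : ∀ f : ℝ, (E + f • A).IsSymm := by
    intro f
    rw [Matrix.IsSymm, transpose_add, transpose_smul, hAsym, hEsym']
  have hnn : n ⬝ᵥ n = 1 := by rw [hn]; exact he
  have han : a ⬝ᵥ n = 0 := by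
    rw [ha, hn, smul_dotProduct, sub_dotProduct, smul_dotProduct, he,
      dotProduct_comm (E *ᵥ ehat) ehat, ← hcq]
    simp
  have hdetA : A.det = 0 := by rw [hAdef]; exact det_half_sym a n
  have hc2A : c2 A = -(a ⬝ᵥ a)/4 := by rw [hAdef, c2_half_sym, han, hnn]; ring
  have hane : a ≠ 0 := by
    intro h
    apply hneq
    rw [hEA, hAdef, h]
    have : vecMulVec (0 : Fin 3 → ℝ) n = 0 := by ext i j; simp [vecMulVec_apply]
    have h2 : vecMulVec n (0 : Fin 3 → ℝ) = 0 := by ext i j; simp [vecMulVec_apply]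
    rw [this, h2]
    simp
  have haa : 0 < a ⬝ᵥ a := by
    have hnz : a ⬝ᵥ a ≠ 0 := fun h => hane (dotProduct_self_eq_zero.mp h)
    have hge : 0 ≤ a ⬝ᵥ a := by
      simp only [dotProduct, Fin.sum_univ_three]
      nlinarith [mul_self_nonneg (a 0), mul_self_nonneg (a 1), mul_self_nonneg (a 2)]
    exact lt_of_le_of_ne hge (Ne.symm hnz)
  have hc2Alt : c2 A < 0 := by rw [hc2A]; linarith
  -- polynomial-in-f facts
  obtain ⟨c1, hc1⟩ : ∃ x : ℝ, ((E * E - E.trace • E + c2 E • 1) * A).trace = x := ⟨_, rfl⟩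
  obtain ⟨cd2, hcd2⟩ : ∃ x : ℝ, ((A * A - A.trace • A + c2 A • 1) * E).trace = x := ⟨_, rfl⟩
  have hdf : ∀ f : ℝ, (E + f • A).det = E.det + f * c1 + f^2 * cd2 := by
    intro f; rw [keyD E A f, hdetA, hc1, hcd2]; ring
  have hqf0 := keyQ E A
  have hE1A : E + (1:ℝ) • A = Ehat := by rw [hEA]; module
  have hmq : E.trace * A.trace - (E * A).trace = - c2 A := by
    have h := keyQ E A 1
    rw [hE1A, hc2Ehat] at h
    norm_num at h
    linarith [h]
  have hqf : ∀ f : ℝ, c2 (E + f • A) = c2 E - f * c2 A + f^2 * c2 A := by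
    intro f; rw [keyQ E A f, hmq]; ring
  -- CCL3 translation
  have hEEhat : E + Ehat = (2:ℝ) • (E + (1/2 : ℝ) • A) := by rw [hEA]; module
  have hCCL3eq : (E + Ehat).trace ^ 2 - ((E + Ehat) * (E + Ehat)).trace
      = 8 * c2 (E + (1/2:ℝ) • A) := by
    rw [hEEhat, c2_two_smul]
  constructor
  · -- forward
    intro hLHS
    have hdq : ∀ f : ℝ, f ∈ Set.Icc (0:ℝ) 1 →
        (E + f • A).det = 0 ∧ c2 (E + f • A) ≤ 0 := by
      intro f hf
      obtain ⟨b, m, hbm⟩ := hLHS f hf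
      rw [hSf f] at hbm
      refine ⟨by rw [hbm]; exact det_half_sym b m, ?_⟩
      rw [hbm, c2_half_sym]
      have := cauchy3 b m
      linarith
    have h0 := hdq 0 (by constructor <;> norm_num)
    have hhalf := hdq (1/2) (by constructor <;> norm_num)
    have h1 := hdq 1 (by constructor <;> norm_num)
    have hdetE : E.det = 0 := by
      have h := h0.1; rw [hdf 0] at h; simpa using h
    have hc10 : c1 = 0 ∧ cd2 = 0 := by
      have ha1 := h1.1; rw [hdf 1, hdetE] at ha1; norm_num at ha1
      have ha2 := hhalf.1; rw [hdf (1/2), hdetE] at ha2; norm_num at ha2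
      constructor <;> linarith [ha1, ha2]
    have hqhalf : c2 E - c2 A / 4 ≤ 0 := by
      have h := hhalf.2; rw [hqf (1/2)] at h; norm_num at h; linarith [h]
    have hc2E_lt : c2 E < 0 := by linarith [hqhalf, hc2Alt]
    obtain ⟨U, μ, hU1, hU2, hSd, hrank⟩ := spectral3 E hE
    have hinv := conj_inv3 U (diagonal μ) hU2
    rw [← hSd] at hinv
    have hμd : μ 0 * (μ 1 * μ 2) = 0 := by rw [← det_diag3, ← hinv.2.1]; exact hdetE
    have hμc : μ 0 * μ 1 + μ 0 * μ 2 + μ 1 * μ 2 < 0 := by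
      rw [← c2_diag3, ← hinv.2.2]; exact hc2E_lt
    obtain ⟨k, hk, ho⟩ := helper_one_zero μ hμd hμc
    have hrank2 : E.rank = 2 := by rw [hrank]; exact card_two μ k hk ho
    obtain ⟨v2', hv2'u, hv2'k, hker⟩ := ker_package E U μ hU1 hU2 hSd k hk ho
    have hmid : IsMiddleEigenvalue E 0 := (middle_iff E).mpr ⟨hdetE, le_of_lt hc2E_lt⟩
    refine ⟨⟨hmid, hrank2⟩, ?_, ?_⟩
    · intro v2 hv2u hv2k
      obtain ⟨c0, hc0⟩ := hker v2 hv2k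
      have hc0ne : c0 ≠ 0 := by
        intro h
        rw [h, zero_smul] at hc0
        rw [hc0] at hv2u
        simp [dotProduct] at hv2u
      have hkerv2 : ∀ x, E *ᵥ x = 0 → ∃ c : ℝ, x = c • v2 := by
        intro x hx
        obtain ⟨cx, hcx⟩ := hker x hx
        have hv2' : v2' = c0⁻¹ • v2 := by
          rw [hc0, smul_smul, inv_mul_cancel₀ hc0ne, one_smul]
        exact ⟨cx * c0⁻¹, by rw [hcx, hv2', smul_smul]⟩
      have hGeq := G_eq E hE hdetE v2 hv2u hv2k hkerv2
      have hc1val : c1 = c2 E * ((a ⬝ᵥ v2) * (n ⬝ᵥ v2)) := by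
        rw [← hc1, hGeq, Matrix.smul_mul, trace_smul, trace_vmv_mul, hAdef, quad_half_sym,
          smul_eq_mul]
      rw [hc10.1] at hc1val
      rcases mul_eq_zero.mp hc1val.symm with h | h
      · exact absurd h (ne_of_lt hc2E_lt)
      · exact h
    · rw [hCCL3eq]
      have h := hhalf.2
      linarith
  · -- backward
    rintro ⟨⟨hmid, hrank2⟩, hCCL2, hCCL3⟩
    obtain ⟨hdetE, hc2E_le⟩ := (middle_iff E).mp hmid
    obtain ⟨U, μ, hU1, hU2, hSd, hrank⟩ := spectral3 E hE
    have hinv := conj_inv3 U (diagonal μ) hU2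
    rw [← hSd] at hinv
    have hμd : μ 0 * (μ 1 * μ 2) = 0 := by rw [← det_diag3, ← hinv.2.1]; exact hdetE
    have hc2ne : c2 E ≠ 0 := by
      intro h0
      have hμc0 : μ 0 * μ 1 + μ 0 * μ 2 + μ 1 * μ 2 = 0 := by
        rw [← c2_diag3, ← hinv.2.2]; exact h0
      obtain ⟨k, k', hkk', hk, hk'⟩ := helper_two_zero μ hμd hμc0
      have hle := card_le_one_of_two_zeros μ k k' hkk' hk hk'
      rw [hrank] at hrank2
      omega
    have hc2E_lt : c2 E < 0 := lt_of_le_of_ne hc2E_le hc2ne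
    have hμc : μ 0 * μ 1 + μ 0 * μ 2 + μ 1 * μ 2 < 0 := by
      rw [← c2_diag3, ← hinv.2.2]; exact hc2E_lt
    obtain ⟨k, hk, ho⟩ := helper_one_zero μ hμd hμc
    obtain ⟨v2', hv2'u, hv2'k, hker⟩ := ker_package E U μ hU1 hU2 hSd k hk ho
    have hGeq := G_eq E hE hdetE v2' hv2'u hv2'k hker
    have hc1val : c1 = c2 E * ((a ⬝ᵥ v2') * (n ⬝ᵥ v2')) := by
      rw [← hc1, hGeq, Matrix.smul_mul, trace_smul, trace_vmv_mul, hAdef, quad_half_sym,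
        smul_eq_mul]
    have hc10 : c1 = 0 := by
      rw [hc1val, hCCL2 v2' hv2'u hv2'k, mul_zero]
    have hcd20 : cd2 = 0 := by
      have h := hdf 1
      rw [hE1A, hdetEhat, hdetE] at h
      norm_num at h
      linarith [h]
    have hqhalf : c2 (E + (1/2:ℝ) • A) ≤ 0 := by
      rw [hCCL3eq] at hCCL3
      linarith
    have hqhalf' : c2 E - c2 A / 4 ≤ 0 := by
      rw [hqf (1/2)] at hqhalf
      norm_num at hqhalf
      linarith [hqhalf]
    intro f hf
    obtain ⟨hf0, hf1⟩ := hf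
    have hdet0 : (E + f • A).det = 0 := by
      rw [hdf f, hdetE, hc10, hcd20]; ring
    have hc2f : c2 (E + f • A) ≤ 0 := by
      rw [hqf f]
      have key : c2 E - f * c2 A + f^2 * c2 A
          = (c2 E - c2 A/4) + c2 A * (f - 1/2)^2 := by ring
      rw [key]
      have h2 : c2 A * (f - 1/2)^2 ≤ 0 :=
        mul_nonpos_iff.mpr (Or.inr ⟨hc2Alt.le, sq_nonneg _⟩)
      linarith [hqhalf', h2]
    obtain ⟨b, m, hbm⟩ := repr_of (E + f • A) (hSsymm f) hdet0 hc2f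
    exact ⟨b, m, by rw [hSf f]; exact hbm⟩
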